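/- If (X,d) is a compact metric space and f : X → X is an expansive continuous map, then there is r ∈ ℕ such that N_n(f) ≤ r^n for all n; consequently the zeta function ζ_f has radius of convergence at least 1/r > 0. -/

import Mathlib

/-- If `(X, d)` is a compact metric space and `f : X → X` is an expansive continuous map,
then there is `r ∈ ℕ` with `N_n(f) ≤ rⁿ` for all `n ≥ 1`; consequently the zeta function
`ζ_f` has radius of convergence at least `1/r > 0`. -/
theorem expansive_zeta_positive_radius {X : Type*} [MetricSpace X] [CompactSpace X]
    [Nonempty X] (f : X → X) (hf : Continuous f) (ε : ℝ) (hε : 0 < ε)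
    (hexp : ∀ x y : X, (∀ n : ℕ, dist (f^[n] x) (f^[n] y) ≤ ε) → x = y) :
    ∃ r : ℕ, 0 < r ∧
      (∀ n : ℕ, 0 < n → Nat.card {x : X | f^[n] x = x} ≤ r ^ n) ∧
      ∀ t : ℂ, ‖t‖ < 1 / r →
        Summable (fun n : ℕ =>
          ((Nat.card {x : X | f^[n + 1] x = x} : ℂ) / (n + 1)) * t ^ (n + 1)) := by
  obtain ⟨s, hs⟩ := isCompact_univ.elim_finite_subcover
    (fun c : X => Metric.ball c (ε / 2)) (fun c => Metric.isOpen_ball)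
    (fun x _ => Set.mem_iUnion.2 ⟨x, Metric.mem_ball_self (by linarith)⟩)
  have hmem : ∀ z : X, ∃ c ∈ s, z ∈ Metric.ball c (ε / 2) := by
    intro z
    have := hs (Set.mem_univ z)
    simpa using this
  choose c hc hcb using hmem
  set r : ℕ := max s.card 1 with hrdef
  have hr1 : 1 ≤ r := le_max_right _ _
  have hbound : ∀ n : ℕ, 0 < n → Nat.card {x : X | f^[n] x = x} ≤ r ^ n := by
    intro n hn
    have hinj : Function.Injective
        (fun x : {x : X | f^[n] x = x} =>
          fun k : Fin n => (⟨c (f^[k.1] x.1), hc _⟩ : s)) := by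
      intro x y hxy
      have hdist : ∀ m : ℕ, dist (f^[m] x.1) (f^[m] y.1) ≤ ε := by
        intro m
        have hxp : Function.IsPeriodicPt f n x.1 := x.2
        have hyp : Function.IsPeriodicPt f n y.1 := y.2
        have hk : m % n < n := Nat.mod_lt _ hn
        have hceq : c (f^[m % n] x.1) = c (f^[m % n] y.1) := by
          have := congrFun hxy ⟨m % n, hk⟩
          exact Subtype.ext_iff.1 this
        have h1 : dist (f^[m % n] x.1) (c (f^[m % n] x.1)) < ε / 2 :=
          Metric.mem_ball.1 (hcb _)
        have h2 : dist (f^[m % n] y.1) (c (f^[m % n] y.1)) < ε / 2 :=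
          Metric.mem_ball.1 (hcb _)
        have h3 : dist (f^[m % n] x.1) (f^[m % n] y.1) ≤ ε := by
          calc dist (f^[m % n] x.1) (f^[m % n] y.1)
              ≤ dist (f^[m % n] x.1) (c (f^[m % n] x.1))
                + dist (c (f^[m % n] y.1)) (f^[m % n] y.1) := by
                rw [hceq]; exact dist_triangle _ _ _
            _ ≤ ε := by rw [dist_comm (c (f^[m % n] y.1))]; linarith
        rwa [hxp.iterate_mod_apply m, hyp.iterate_mod_apply m] at h3
      exact Subtype.ext (hexp x.1 y.1 hdist)
    calc Nat.card {x : X | f^[n] x = x} ≤ Nat.card (Fin n → s) :=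
          Nat.card_le_card_of_injective _ hinj
      _ = s.card ^ n := by
          simp [Nat.card_eq_fintype_card, Fintype.card_fun]
      _ ≤ r ^ n := Nat.pow_le_pow_left (le_max_left _ _) n
  refine ⟨r, hr1, hbound, ?_⟩
  intro t ht
  have hr1' : (1 : ℝ) ≤ (r : ℝ) := by exact_mod_cast hr1
  have hr0 : (0 : ℝ) < (r : ℝ) := by linarith
  have hq0 : (0 : ℝ) ≤ (r : ℝ) * ‖t‖ := by positivity
  have hq : (r : ℝ) * ‖t‖ < 1 := by
    have := mul_lt_mul_of_pos_left ht hr0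
    rwa [mul_one_div, div_self (ne_of_gt hr0)] at this
  have hg : Summable (fun n : ℕ => ((r : ℝ) * ‖t‖) ^ (n + 1)) := by
    have := (summable_geometric_of_lt_one hq0 hq).mul_left ((r : ℝ) * ‖t‖)
    simpa [pow_succ, mul_comm] using this
  refine Summable.of_norm_bounded hg ?_
  intro n
  have hN : (Nat.card {x : X | f^[n + 1] x = x} : ℝ) ≤ (r : ℝ) ^ (n + 1) := by
    exact_mod_cast hbound (n + 1) (Nat.succ_pos n)
  have hN0 : (0 : ℝ) ≤ (Nat.card {x : X | f^[n + 1] x = x} : ℝ) := Nat.cast_nonneg _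
  have hnorm : ‖((Nat.card {x : X | f^[n + 1] x = x} : ℂ) / (n + 1)) * t ^ (n + 1)‖
      = (Nat.card {x : X | f^[n + 1] x = x} : ℝ) / (n + 1) * ‖t‖ ^ (n + 1) := by
    rw [norm_mul, norm_div, norm_pow]
    congr 2
    · simp
    · have : ((n : ℂ) + 1) = ((n + 1 : ℕ) : ℂ) := by push_cast; ring
      rw [this, Complex.norm_natCast]
      push_cast; ring
  rw [hnorm]
  calc (Nat.card {x : X | f^[n + 1] x = x} : ℝ) / (n + 1) * ‖t‖ ^ (n + 1)
      ≤ (Nat.card {x : X | f^[n + 1] x = x} : ℝ) * ‖t‖ ^ (n + 1) := by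
        apply mul_le_mul_of_nonneg_right _ (by positivity)
        apply div_le_self hN0
        have : (0 : ℝ) ≤ (n : ℝ) := Nat.cast_nonneg n
        linarith
    _ ≤ (r : ℝ) ^ (n + 1) * ‖t‖ ^ (n + 1) :=
        mul_le_mul_of_nonneg_right hN (by positivity)
    _ = ((r : ℝ) * ‖t‖) ^ (n + 1) := (mul_pow _ _ _).symm
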